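/- Let ξ̄ > 0 and set ν_c = 1/(1 + ξ̄⁻¹√(2/π)). For every ν with ν_c < ν < 1, the map U ↦ Φ_a(U; ν, 0, ξ̄) has a fixed point U* in the open interval (0, 1/2), and then 1 − U* ∈ (1/2, 1) is also a fixed point. -/

import Mathlib

open MeasureTheory
open Set Topology Filter

/-- The complementary error function `erfc x = (2/√π) ∫_x^∞ exp(−t²) dt`. -/
noncomputable def erfc (x : ℝ) : ℝ :=
  (2 / Real.sqrt Real.pi) * ∫ t in Set.Ioi x, Real.exp (-t ^ 2)

lemma gauss_int : Integrable (fun t : ℝ => Real.exp (-t ^ 2)) := by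
  simpa using integrable_exp_neg_mul_sq (one_pos)

lemma gauss_total : (∫ t : ℝ, Real.exp (-t ^ 2)) = Real.sqrt Real.pi := by
  simpa using integral_gaussian 1

lemma gauss_Ioi_zero : (∫ t in Set.Ioi (0:ℝ), Real.exp (-t ^ 2)) = Real.sqrt Real.pi / 2 := by
  simpa using integral_gaussian_Ioi 1

lemma erfc_zero : erfc 0 = 1 := by
  have h : Real.sqrt Real.pi ≠ 0 := by positivity
  rw [erfc, gauss_Ioi_zero]; field_simp

lemma erfc_neg (x : ℝ) : erfc (-x) = 2 - erfc x := by
  have h1 : (∫ t in Set.Ioi (-x), Real.exp (-t ^ 2)) = ∫ t in Set.Iic x, Real.exp (-t ^ 2) := by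
    have h0 := integral_comp_neg_Ioi (-x) (fun t => Real.exp (-t ^ 2))
    simp only [neg_neg, neg_sq] at h0
    exact h0
  have h2 := intervalIntegral.integral_Iic_add_Ioi (b := x) gauss_int.integrableOn gauss_int.integrableOn
  rw [gauss_total] at h2
  have h : Real.sqrt Real.pi ≠ 0 := by positivity
  rw [erfc, erfc, h1]
  field_simp
  linarith

lemma gauss_cont : Continuous (fun t : ℝ => Real.exp (-t ^ 2)) := by fun_prop

lemma erfc_pos (x : ℝ) : 0 < erfc x := by
  have h : 0 < ∫ t in Set.Ioi x, Real.exp (-t ^ 2) := by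
    rw [setIntegral_pos_iff_support_of_nonneg_ae]
    · have hs : Function.support (fun t : ℝ => Real.exp (-t ^ 2)) = Set.univ := by
        ext t; simp [Real.exp_ne_zero]
      rw [hs, Set.univ_inter]
      simp [Real.volume_Ioi]
    · filter_upwards with t using (Real.exp_pos _).le
    · exact gauss_int.integrableOn
  have : (0:ℝ) < 2 / Real.sqrt Real.pi := by positivity
  exact mul_pos this h

lemma F_eq (x : ℝ) : (∫ t in Set.Ioi x, Real.exp (-t ^ 2))
    = (∫ t in Set.Ioi (0:ℝ), Real.exp (-t ^ 2)) - ∫ t in (0:ℝ)..x, Real.exp (-t ^ 2) := by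
  have h1 := intervalIntegral.integral_Iic_add_Ioi (b := x) (μ := volume)
    gauss_int.integrableOn gauss_int.integrableOn
  have h2 := intervalIntegral.integral_Iic_add_Ioi (b := (0:ℝ)) (μ := volume)
    gauss_int.integrableOn gauss_int.integrableOn
  have h3 := intervalIntegral.integral_Iic_sub_Iic (a := (0:ℝ)) (b := x) (μ := volume)
    gauss_int.integrableOn gauss_int.integrableOn
  linarith

lemma erfc_hasDerivAt (x : ℝ) :
    HasDerivAt erfc (-(2 / Real.sqrt Real.pi) * Real.exp (-x ^ 2)) x := by
  have hFTC : HasDerivAt (fun y => ∫ t in (0:ℝ)..y, Real.exp (-t ^ 2))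
      (Real.exp (-x ^ 2)) x :=
    intervalIntegral.integral_hasDerivAt_right gauss_int.intervalIntegrable
      (gauss_cont.stronglyMeasurableAtFilter _ _) gauss_cont.continuousAt
  have hF : HasDerivAt (fun y => ∫ t in Set.Ioi y, Real.exp (-t ^ 2))
      (-Real.exp (-x ^ 2)) x := by
    have := (hasDerivAt_const x (∫ t in Set.Ioi (0:ℝ), Real.exp (-t ^ 2))).sub hFTC
    simp only [zero_sub] at this
    refine HasDerivAt.congr_of_eventuallyEq this ?_
    filter_upwards with y using F_eq y
  have := hF.const_mul (2 / Real.sqrt Real.pi)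
  have e : -(2 / Real.sqrt Real.pi) * Real.exp (-x ^ 2) = 2 / Real.sqrt Real.pi * -Real.exp (-x ^ 2) := by ring
  rw [e]; exact this

lemma erfc_continuous : Continuous erfc :=
  continuous_iff_continuousAt.2 fun x => (erfc_hasDerivAt x).continuousAt

/-- The approximate coarse evolution map
`Φ_a(U; ν̄, μ̄, ξ̄) = (1/2)·erfc[(1/(ξ̄√2))·(ν̄(1−2U)/(1−ν̄) − μ̄)]`. -/
noncomputable def PhiA (U ν μ ξ : ℝ) : ℝ :=
  (1 / 2) * erfc ((1 / (ξ * Real.sqrt 2)) * (ν * (1 - 2 * U) / (1 - ν) - μ))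

/-- Let `ξ̄ > 0` and `ν_c = 1/(1 + ξ̄⁻¹√(2/π))`. For every `ν` with
`ν_c < ν < 1`, the map `U ↦ Φ_a(U; ν, 0, ξ̄)` has a fixed point `U*` in `(0, 1/2)`,
and then `1 − U* ∈ (1/2, 1)` is also a fixed point. -/
theorem locked_in_fixed_points_exist
    (ξ ν : ℝ) (hξ : 0 < ξ)
    (hν : 1 / (1 + ξ⁻¹ * Real.sqrt (2 / Real.pi)) < ν) (hν1 : ν < 1) :
    ∃ U ∈ Set.Ioo (0 : ℝ) (1 / 2),
      PhiA U ν 0 ξ = U ∧ (1 - U) ∈ Set.Ioo (1 / 2 : ℝ) 1 ∧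
        PhiA (1 - U) ν 0 ξ = 1 - U := by
  have hπ : (0:ℝ) < Real.sqrt Real.pi := Real.sqrt_pos.2 Real.pi_pos
  have h2 : (0:ℝ) < Real.sqrt 2 := by positivity
  have h22 : Real.sqrt 2 * Real.sqrt 2 = 2 := Real.mul_self_sqrt (by norm_num)
  have hD : (0:ℝ) < 1 + ξ⁻¹ * Real.sqrt (2 / Real.pi) := by positivity
  have hν0 : 0 < ν := lt_trans (by positivity) hν
  have h1ν : 0 < 1 - ν := by linarith
  set k : ℝ := (1 / (ξ * Real.sqrt 2)) * (ν / (1 - ν)) with hkdef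
  have hk : 0 < k := by positivity
  have hPhi : ∀ U : ℝ, PhiA U ν 0 ξ = (1/2) * erfc (k * (1 - 2*U)) := by
    intro U; unfold PhiA; rw [hkdef]; congr 2
    field_simp
    all_goals ring
  have hsd : Real.sqrt (2 / Real.pi) = Real.sqrt 2 / Real.sqrt Real.pi :=
    Real.sqrt_div (by norm_num) _
  have key : 1 - ν < ν * ξ⁻¹ * (Real.sqrt 2 / Real.sqrt Real.pi) := by
    have h1 : 1 < ν * (1 + ξ⁻¹ * Real.sqrt (2 / Real.pi)) := by
      rw [div_lt_iff₀ hD] at hν; linarith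
    rw [hsd] at h1; nlinarith
  have hslope : 1 < 2 * k / Real.sqrt Real.pi := by
    have heq : 2 * k / Real.sqrt Real.pi
        = (ν * ξ⁻¹ * (Real.sqrt 2 / Real.sqrt Real.pi)) / (1 - ν) := by
      rw [hkdef]; field_simp
      linear_combination (-1:ℝ)*h22
    rw [heq, lt_div_iff₀ h1ν]; linarith
  -- the auxiliary function
  set g : ℝ → ℝ := fun U => (1/2) * erfc (k * (1 - 2*U)) - U with hgdef
  have hginner : Continuous (fun U : ℝ => k * (1 - 2*U)) := by fun_prop
  have hgc : Continuous g :=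
    (continuous_const.mul (erfc_continuous.comp hginner)).sub continuous_id
  have hg0 : 0 < g 0 := by
    have h := erfc_pos (k * (1 - 2*(0:ℝ)))
    simp only [hgdef]
    norm_num at h ⊢
    linarith
  have hghalf : g (1/2) = 0 := by
    simp only [hgdef]
    norm_num [erfc_zero]
  -- derivative of g at 1/2
  have hd1 : HasDerivAt (fun U : ℝ => k * (1 - 2*U)) (k * (-2)) (1/2 : ℝ) := by
    have h := ((hasDerivAt_id (1/2:ℝ)).const_mul (2:ℝ)).const_sub (1:ℝ)
    have := h.const_mul k
    simpa using this
  have hd2 := ((erfc_hasDerivAt (k * (1 - 2*(1/2:ℝ)))).comp (1/2 : ℝ) hd1).const_mul (1/2 : ℝ)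
  have hdg : HasDerivAt g (2 * k / Real.sqrt Real.pi - 1) (1/2 : ℝ) := by
    have h := hd2.sub (hasDerivAt_id (1/2:ℝ))
    refine HasDerivAt.congr_deriv h ?_
    norm_num [Real.exp_zero]
    ring
  -- find a point slightly left of 1/2 where g < 0
  have hne : 𝓝[<] (1/2 : ℝ) ≤ 𝓝[≠] (1/2 : ℝ) :=
    nhdsWithin_mono _ (fun y hy => ne_of_lt hy)
  have hsl := hasDerivAt_iff_tendsto_slope.1 hdg
  have hev : ∀ᶠ y in 𝓝[<] (1/2 : ℝ), 0 < slope g (1/2) y :=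
    ((hsl.mono_left hne).eventually (eventually_gt_nhds (by linarith)))
  have hmem : Set.Ioo (0:ℝ) (1/2) ∈ 𝓝[<] (1/2 : ℝ) :=
    Ioo_mem_nhdsLT_of_mem (by norm_num)
  obtain ⟨y, hy1, hy2⟩ := (hev.and (Filter.eventually_of_mem hmem fun y hy => hy)).exists
  have hyneg : g y < 0 := by
    have hs : slope g (1/2) y = g y / (y - 1/2) := by
      rw [slope_def_field, hghalf, sub_zero]
    rw [hs] at hy1
    rcases div_pos_iff.1 hy1 with ⟨_, h⟩ | ⟨h, _⟩
    · linarith [hy2.2]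
    · linarith
  -- IVT on [0, y]
  have hiv := intermediate_value_Ioo' (le_of_lt hy2.1) hgc.continuousOn
  have h0mem : (0:ℝ) ∈ Set.Ioo (g y) (g 0) := ⟨hyneg, hg0⟩
  obtain ⟨c, hc, hgc0⟩ := hiv h0mem
  have hcI : c ∈ Set.Ioo (0:ℝ) (1/2) := ⟨hc.1, lt_trans hc.2 hy2.2⟩
  have hfix : PhiA c ν 0 ξ = c := by
    rw [hPhi c]
    have : (1/2) * erfc (k * (1 - 2*c)) - c = 0 := hgc0
    linarith
  refine ⟨c, hcI, hfix, ⟨by linarith [hcI.2], by linarith [hcI.1]⟩, ?_⟩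
  have harg : k * (1 - 2*(1-c)) = -(k * (1 - 2*c)) := by ring
  rw [hPhi (1-c), harg, erfc_neg]
  have : (1/2) * erfc (k * (1 - 2*c)) = c := by
    have := hgc0; simp only [hgdef] at this; linarith
  linarith
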